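/- Consider an adversarial K-armed bandit over T₂ rounds with oblivious losses l_{j,t} ∈ [0,1], initial cumulative losses L_{j,0} ∈ [0, N'] satisfying ∑_{j=1}^K L_{j,0}² ≤ K·N'²/2, importance-weighted loss estimates, weights w_{j,t} = exp(−η_t·L_{j,t−1}) with η_t = √(ln K/(tK)), and arm j_t drawn proportionally to w_{j,t}. Then for every fixed arm j', E[∑_{t=1}^{T₂} l_{j_t,t} − ∑_{t=1}^{T₂} l_{j',t}] ≤ 2√(T₂·K·ln K) + (N'²/4)·√(ln K/K) + N'. -/

import Mathlib

/-- Learning rate at (0-indexed) step `t`: `η_{t+1} = √(ln K / ((t+1)·K))`. -/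
noncomputable def bbtaEta (K t : ℕ) : ℝ := Real.sqrt (Real.log K / ((t + 1) * K))

/-- Cumulative importance-weighted losses `L_{j,t}` of the exponentially weighted
forecaster, given initial losses `L0`, oblivious losses `l`, and the sequence `js`
of selected arms: `L_{j,t} = L_{j,t-1} + (l_{j,t}/p_{j,t})·1{j = j_t}`, where
`p_{j,t} ∝ exp(-η_t · L_{j,t-1})`. -/
noncomputable def bbtaCumLoss (K : ℕ) (L0 : Fin K → ℝ) (l : ℕ → Fin K → ℝ)
    (js : ℕ → Fin K) : ℕ → Fin K → ℝ
  | 0 => L0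
  | t + 1 => fun j =>
      bbtaCumLoss K L0 l js t j +
        if j = js t then
          l t j /
            (Real.exp (-(bbtaEta K t) * bbtaCumLoss K L0 l js t j) /
              ∑ j', Real.exp (-(bbtaEta K t) * bbtaCumLoss K L0 l js t j'))
        else 0

/-- Selection probability `p_{j,t}` of arm `j` at step `t` (exponential weighting). -/
noncomputable def bbtaProb (K : ℕ) (L0 : Fin K → ℝ) (l : ℕ → Fin K → ℝ)
    (js : ℕ → Fin K) (t : ℕ) (j : Fin K) : ℝ :=
  Real.exp (-(bbtaEta K t) * bbtaCumLoss K L0 l js t j) /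
    ∑ j', Real.exp (-(bbtaEta K t) * bbtaCumLoss K L0 l js t j')

/-- Extend a finite arm sequence to `ℕ` using a default arm. -/
def extSeq {K T : ℕ} (js : Fin T → Fin K) (j0 : Fin K) : ℕ → Fin K :=
  fun t => if h : t < T then js ⟨t, h⟩ else j0

section Basic

variable {K : ℕ} (L0 : Fin K → ℝ) (l : ℕ → Fin K → ℝ)

/-- the estimated (importance-weighted) loss added at step `t`. -/
noncomputable def bbtaEst (L0 : Fin K → ℝ) (l : ℕ → Fin K → ℝ) (js : ℕ → Fin K)
    (t : ℕ) (j : Fin K) : ℝ :=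
  if j = js t then l t j / bbtaProb K L0 l js t j else 0

lemma bbtaCumLoss_succ (js : ℕ → Fin K) (t : ℕ) (j : Fin K) :
    bbtaCumLoss K L0 l js (t + 1) j = bbtaCumLoss K L0 l js t j + bbtaEst L0 l js t j := by
  rfl

lemma bbtaCumLoss_prefix (js js' : ℕ → Fin K) (t : ℕ)
    (h : ∀ s < t, js s = js' s) :
    bbtaCumLoss K L0 l js t = bbtaCumLoss K L0 l js' t := by
  induction t with
  | zero => rfl
  | succ t ih =>
    have hih : bbtaCumLoss K L0 l js t = bbtaCumLoss K L0 l js' t :=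
      ih fun s hs => h s (hs.trans (Nat.lt_succ_self t))
    funext j
    show bbtaCumLoss K L0 l js t j + _ = bbtaCumLoss K L0 l js' t j + _
    rw [hih, h t (Nat.lt_succ_self t)]

lemma bbtaProb_prefix (js js' : ℕ → Fin K) (t : ℕ)
    (h : ∀ s < t, js s = js' s) :
    bbtaProb K L0 l js t = bbtaProb K L0 l js' t := by
  funext j
  unfold bbtaProb
  rw [bbtaCumLoss_prefix L0 l js js' t h]

lemma sumExp_pos (hK : 0 < K) (f : Fin K → ℝ) : 0 < ∑ j, Real.exp (f j) := by
  have : Nonempty (Fin K) := Fin.pos_iff_nonempty.mp hK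
  exact Finset.sum_pos (fun j _ => Real.exp_pos _) Finset.univ_nonempty

lemma bbtaProb_pos (hK : 0 < K) (js : ℕ → Fin K) (t : ℕ) (j : Fin K) :
    0 < bbtaProb K L0 l js t j :=
  div_pos (Real.exp_pos _) (sumExp_pos hK _)

lemma bbtaProb_sum (hK : 0 < K) (js : ℕ → Fin K) (t : ℕ) :
    ∑ j, bbtaProb K L0 l js t j = 1 := by
  unfold bbtaProb
  rw [← Finset.sum_div]
  exact div_self (sumExp_pos hK _).ne'

lemma bbtaEst_nonneg (hK : 0 < K) (hl : ∀ t j, l t j ∈ Set.Icc (0 : ℝ) 1) (js : ℕ → Fin K) (t : ℕ) (j : Fin K) :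
    0 ≤ bbtaEst L0 l js t j := by
  unfold bbtaEst
  split
  · exact div_nonneg (hl t j).1 (bbtaProb_pos L0 l hK js t j).le
  · exact le_refl 0

lemma bbtaCumLoss_nonneg (hK : 0 < K) (hl : ∀ t j, l t j ∈ Set.Icc (0 : ℝ) 1) (hL0 : ∀ j, 0 ≤ L0 j) (js : ℕ → Fin K) (t : ℕ) (j : Fin K) :
    0 ≤ bbtaCumLoss K L0 l js t j := by
  induction t with
  | zero => exact hL0 j
  | succ t ih =>
    rw [bbtaCumLoss_succ]
    exact add_nonneg ih (bbtaEst_nonneg L0 l hK hl js t j)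

end Basic

section Analytic

lemma exp_neg_le_quadratic {x : ℝ} (hx : 0 ≤ x) :
    Real.exp (-x) ≤ 1 - x + x ^ 2 / 2 := by
  have h1 : 1 + x + x ^ 2 / 2 ≤ Real.exp x := by
    have := Real.sum_le_exp_of_nonneg hx 3
    simp [Finset.sum_range_succ] at this
    nlinarith [this]
  have h2 : (0 : ℝ) < 1 - x + x ^ 2 / 2 := by nlinarith [sq_nonneg (x - 1)]
  rw [Real.exp_neg, inv_le_iff_one_le_mul₀ (Real.exp_pos x)]
  nlinarith [Real.exp_pos x]

end Analytic

lemma potential_eta_mono {K : ℕ} (hK : 0 < K) (L : Fin K → ℝ) {a b : ℝ}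
    (ha : 0 < a) (hab : a ≤ b) :
    -(Real.log (∑ j, Real.exp (-b * L j))) / b - Real.log K * (1 / a - 1 / b)
      ≤ -(Real.log (∑ j, Real.exp (-a * L j))) / a := by
  have hb : 0 < b := ha.trans_le hab
  have hSap : 0 < ∑ j, Real.exp (-a * L j) := sumExp_pos hK _
  have hSbp : 0 < ∑ j, Real.exp (-b * L j) := sumExp_pos hK _
  have hKpos : (0 : ℝ) < K := by exact_mod_cast hK
  have hw : ∑ _j : Fin K, (1 : ℝ) / K = 1 := by
    simp [Finset.sum_const, Finset.card_univ]
    field_simp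
  have key0 : (∑ j, (1 : ℝ) / K * Real.exp (-a * L j)) ^ (b / a)
      ≤ ∑ j, (1 : ℝ) / K * Real.exp (-a * L j) ^ (b / a) := by
    refine Real.rpow_arith_mean_le_arith_mean_rpow Finset.univ _ _
      (fun i _ => by positivity) hw (fun i _ => (Real.exp_pos _).le) ?_
    exact (one_le_div ha).mpr hab
  have hexp : ∀ j : Fin K, Real.exp (-a * L j) ^ (b / a) = Real.exp (-b * L j) := by
    intro j
    rw [← Real.exp_mul]
    congr 1
    field_simp
  have key1 : ((∑ j, Real.exp (-a * L j)) / K) ^ (b / a)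
      ≤ (∑ j, Real.exp (-b * L j)) / K := by
    simp_rw [hexp] at key0
    rw [← Finset.mul_sum, ← Finset.mul_sum] at key0
    calc ((∑ j, Real.exp (-a * L j)) / K) ^ (b / a)
        = (1 / K * ∑ j, Real.exp (-a * L j)) ^ (b / a) := by rw [one_div_mul_eq_div]
      _ ≤ 1 / K * ∑ j, Real.exp (-b * L j) := key0
      _ = (∑ j, Real.exp (-b * L j)) / K := one_div_mul_eq_div _ _
  have hmean_pos : 0 < (∑ j, Real.exp (-a * L j)) / K := div_pos hSap hKpos
  have key2 : b / a * Real.log ((∑ j, Real.exp (-a * L j)) / K)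
      ≤ Real.log ((∑ j, Real.exp (-b * L j)) / K) := by
    rw [← Real.log_rpow hmean_pos]
    exact Real.log_le_log (Real.rpow_pos_of_pos hmean_pos _) key1
  rw [Real.log_div hSap.ne' hKpos.ne', Real.log_div hSbp.ne' hKpos.ne'] at key2
  rw [div_mul_eq_mul_div, div_le_iff₀ ha] at key2
  have ha' := ha.ne'
  have hb' := hb.ne'
  have key3 : -(Real.log (∑ j, Real.exp (-b * L j)) - Real.log K) / b
      ≤ -(Real.log (∑ j, Real.exp (-a * L j)) - Real.log K) / a := by
    rw [div_le_div_iff₀ hb ha]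
    nlinarith [key2]
  have e1 : -Real.log (∑ j, Real.exp (-b * L j)) / b - Real.log K * (1 / a - 1 / b)
      = -(Real.log (∑ j, Real.exp (-b * L j)) - Real.log K) / b - Real.log K / a := by
    field_simp
    all_goals ring
  have e2 : -Real.log (∑ j, Real.exp (-a * L j)) / a
      = -(Real.log (∑ j, Real.exp (-a * L j)) - Real.log K) / a - Real.log K / a := by
    field_simp
    all_goals ring
  rw [e1, e2]
  exact sub_le_sub_right key3 _

lemma bbtaEta_nonneg (K t : ℕ) : 0 ≤ bbtaEta K t := Real.sqrt_nonneg _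

lemma bbtaEta_pos {K : ℕ} (hK : 2 ≤ K) (t : ℕ) : 0 < bbtaEta K t := by
  apply Real.sqrt_pos.mpr
  apply div_pos
  · exact Real.log_pos (by exact_mod_cast hK)
  · positivity

lemma bbtaEta_antitone {K : ℕ} (hK : 2 ≤ K) {s t : ℕ} (hst : s ≤ t) :
    bbtaEta K t ≤ bbtaEta K s := by
  apply Real.sqrt_le_sqrt
  apply div_le_div_of_nonneg_left (Real.log_nonneg (by exact_mod_cast hK.trans' (by norm_num)))
  · positivity
  · have : (s : ℝ) ≤ t := by exact_mod_cast hst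
    have hK0 : (0 : ℝ) < K := by positivity
    nlinarith

lemma loss_step {K : ℕ} (L0 : Fin K → ℝ) (l : ℕ → Fin K → ℝ) (hK : 0 < K)
    (hl : ∀ t j, l t j ∈ Set.Icc (0 : ℝ) 1) (js : ℕ → Fin K) (t : ℕ) :
    Real.log (∑ j, Real.exp (-(bbtaEta K t) * bbtaCumLoss K L0 l js (t + 1) j))
      ≤ Real.log (∑ j, Real.exp (-(bbtaEta K t) * bbtaCumLoss K L0 l js t j))
        - bbtaEta K t * l t (js t)
        + (bbtaEta K t) ^ 2 / 2 *
            ((l t (js t)) ^ 2 / bbtaProb K L0 l js t (js t)) := by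
  set η := bbtaEta K t with hη
  have hη0 : 0 ≤ η := Real.sqrt_nonneg _
  set W := ∑ j, Real.exp (-η * bbtaCumLoss K L0 l js t j) with hW
  have hWpos : 0 < W := sumExp_pos hK _
  have hW1pos : 0 < ∑ j, Real.exp (-η * bbtaCumLoss K L0 l js (t + 1) j) := sumExp_pos hK _
  have hppos : ∀ j, 0 < bbtaProb K L0 l js t j := bbtaProb_pos L0 l hK js t
  have hestnn : ∀ j, 0 ≤ bbtaEst L0 l js t j := fun j => by
    unfold bbtaEst
    split
    · exact div_nonneg (hl t j).1 (hppos j).le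
    · exact le_refl 0
  set A := l t (js t) with hA
  set B := (l t (js t)) ^ 2 / bbtaProb K L0 l js t (js t) with hB
  have e_a : ∑ j, Real.exp (-η * bbtaCumLoss K L0 l js t j) * bbtaEst L0 l js t j
      = W * A := by
    rw [Finset.sum_eq_single (js t)]
    · show Real.exp (-η * bbtaCumLoss K L0 l js t (js t)) * bbtaEst L0 l js t (js t) = W * A
      rw [bbtaEst, if_pos rfl, bbtaProb]
      rw [← hη, ← hW, ← hA]
      field_simp
    · intro j _ hj
      rw [bbtaEst, if_neg hj, mul_zero]
    · intro h
      exact absurd (Finset.mem_univ _) h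
  have e_b : ∑ j, Real.exp (-η * bbtaCumLoss K L0 l js t j) * (bbtaEst L0 l js t j) ^ 2
      = W * B := by
    rw [Finset.sum_eq_single (js t)]
    · show Real.exp (-η * bbtaCumLoss K L0 l js t (js t)) * (bbtaEst L0 l js t (js t)) ^ 2 = W * B
      rw [bbtaEst, if_pos rfl, bbtaProb]
      rw [← hη, ← hW, ← hA, hB, bbtaProb, ← hη, ← hW]
      have := (Real.exp_pos (-η * bbtaCumLoss K L0 l js t (js t))).ne'
      field_simp
      ring
    · intro j _ hj
      rw [bbtaEst, if_neg hj, zero_pow (by norm_num), mul_zero]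
    · intro h
      exact absurd (Finset.mem_univ _) h
  have hstep : ∀ j, Real.exp (-η * bbtaCumLoss K L0 l js (t + 1) j)
      ≤ Real.exp (-η * bbtaCumLoss K L0 l js t j) *
          (1 - η * bbtaEst L0 l js t j + (η * bbtaEst L0 l js t j) ^ 2 / 2) := by
    intro j
    rw [bbtaCumLoss_succ]
    have : -η * (bbtaCumLoss K L0 l js t j + bbtaEst L0 l js t j)
        = -η * bbtaCumLoss K L0 l js t j + -(η * bbtaEst L0 l js t j) := by ring
    rw [this, Real.exp_add]
    exact mul_le_mul_of_nonneg_left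
      (exp_neg_le_quadratic (mul_nonneg hη0 (hestnn j))) (Real.exp_pos _).le
  have hX : (∑ j, Real.exp (-η * bbtaCumLoss K L0 l js (t + 1) j))
      ≤ W * (1 - η * A + η ^ 2 / 2 * B) := by
    calc (∑ j, Real.exp (-η * bbtaCumLoss K L0 l js (t + 1) j))
        ≤ ∑ j, Real.exp (-η * bbtaCumLoss K L0 l js t j) *
            (1 - η * bbtaEst L0 l js t j + (η * bbtaEst L0 l js t j) ^ 2 / 2) :=
          Finset.sum_le_sum fun j _ => hstep j
      _ = W - η * (W * A) + η ^ 2 / 2 * (W * B) := by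
          rw [← e_a, ← e_b, hW]
          rw [Finset.mul_sum, Finset.mul_sum, ← Finset.sum_sub_distrib, ← Finset.sum_add_distrib]
          congr 1
          ext j
          ring
      _ = W * (1 - η * A + η ^ 2 / 2 * B) := by ring
  have hXpos : 0 < 1 - η * A + η ^ 2 / 2 * B := by nlinarith [hW1pos, hX, hWpos]
  calc Real.log (∑ j, Real.exp (-η * bbtaCumLoss K L0 l js (t + 1) j))
      ≤ Real.log (W * (1 - η * A + η ^ 2 / 2 * B)) := Real.log_le_log hW1pos hX
    _ = Real.log W + Real.log (1 - η * A + η ^ 2 / 2 * B) := Real.log_mul hWpos.ne' hXpos.ne'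
    _ ≤ Real.log W + (1 - η * A + η ^ 2 / 2 * B - 1) :=
        by linarith [Real.log_le_sub_one_of_pos hXpos]
    _ = Real.log W - η * A + η ^ 2 / 2 * B := by ring

lemma div_step {η x y A B : ℝ} (hη : 0 < η) (h : x ≤ y - η * A + η ^ 2 / 2 * B) :
    -y / η + (A - η / 2 * B) ≤ -x / η := by
  have h1 : -(y - η * A + η ^ 2 / 2 * B) / η ≤ -x / η :=
    (div_le_div_iff_of_pos_right hη).mpr (neg_le_neg h)
  have e : -(y - η * A + η ^ 2 / 2 * B) / η = -y / η + (A - η / 2 * B) := by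
    field_simp
    ring
  linarith [h1, e.ge]

lemma telescope {K : ℕ} (L0 : Fin K → ℝ) (l : ℕ → Fin K → ℝ) (hK : 2 ≤ K)
    (hl : ∀ t j, l t j ∈ Set.Icc (0 : ℝ) 1) (js : ℕ → Fin K) (n : ℕ) :
    -(Real.log (∑ j, Real.exp (-(bbtaEta K 0) * bbtaCumLoss K L0 l js 0 j))) / bbtaEta K 0
      + ∑ t ∈ Finset.range (n + 1),
          (l t (js t) - bbtaEta K t / 2 * ((l t (js t)) ^ 2 / bbtaProb K L0 l js t (js t)))
      - Real.log K * (1 / bbtaEta K n - 1 / bbtaEta K 0)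
    ≤ -(Real.log (∑ j, Real.exp (-(bbtaEta K n) * bbtaCumLoss K L0 l js (n + 1) j)))
        / bbtaEta K n := by
  have hK0 : 0 < K := by omega
  induction n with
  | zero =>
    simp only [zero_add, Finset.sum_range_one, sub_self, mul_zero, sub_zero]
    have h := loss_step L0 l hK0 hl js 0
    have := div_step (bbtaEta_pos hK 0) h
    linarith
  | succ n ih =>
    have mix := potential_eta_mono hK0 (bbtaCumLoss K L0 l js (n + 1))
      (bbtaEta_pos hK (n + 1)) (bbtaEta_antitone hK (Nat.le_succ n))
    have ls := div_step (bbtaEta_pos hK (n + 1)) (loss_step L0 l hK0 hl js (n + 1))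
    rw [Finset.sum_range_succ]
    linarith [ih, mix, ls]

lemma bbtaCumLoss_eq_sum {K : ℕ} (L0 : Fin K → ℝ) (l : ℕ → Fin K → ℝ)
    (js : ℕ → Fin K) (m : ℕ) (j : Fin K) :
    bbtaCumLoss K L0 l js m j = L0 j + ∑ t ∈ Finset.range m, bbtaEst L0 l js t j := by
  induction m with
  | zero => simp [bbtaCumLoss]
  | succ m ih => rw [bbtaCumLoss_succ, ih, Finset.sum_range_succ]; ring

lemma deterministic_bound {K : ℕ} (L0 : Fin K → ℝ) (l : ℕ → Fin K → ℝ) (hK : 2 ≤ K)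
    (hl : ∀ t j, l t j ∈ Set.Icc (0 : ℝ) 1) (hL0 : ∀ j, 0 ≤ L0 j)
    (js : ℕ → Fin K) (j' : Fin K) (n : ℕ) :
    ∑ t ∈ Finset.range (n + 1), l t (js t)
      ≤ L0 j' + ∑ t ∈ Finset.range (n + 1), bbtaEst L0 l js t j'
        + ∑ t ∈ Finset.range (n + 1),
            bbtaEta K t / 2 * ((l t (js t)) ^ 2 / bbtaProb K L0 l js t (js t))
        + Real.log K / bbtaEta K n := by
  have hK0 : 0 < K := by omega
  have hKr : (0 : ℝ) < K := by positivity
  have hη0 := bbtaEta_pos hK 0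
  have hηn := bbtaEta_pos hK n
  have htel := telescope L0 l hK hl js n
  -- endpoint 1 : -(log W0)/η0 ≥ -(log K)/η0
  have hW0le : (∑ j, Real.exp (-(bbtaEta K 0) * bbtaCumLoss K L0 l js 0 j)) ≤ K := by
    calc (∑ j, Real.exp (-(bbtaEta K 0) * bbtaCumLoss K L0 l js 0 j))
        ≤ ∑ _j : Fin K, (1 : ℝ) := by
          apply Finset.sum_le_sum
          intro j _
          apply Real.exp_le_one_iff.mpr
          have : bbtaCumLoss K L0 l js 0 j = L0 j := rfl
          rw [this]
          have := hL0 j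
          nlinarith [bbtaEta_nonneg K 0]
      _ = K := by simp
  have hW0pos : 0 < ∑ j, Real.exp (-(bbtaEta K 0) * bbtaCumLoss K L0 l js 0 j) :=
    sumExp_pos hK0 _
  have hend1 : -(Real.log K) / bbtaEta K 0
      ≤ -(Real.log (∑ j, Real.exp (-(bbtaEta K 0) * bbtaCumLoss K L0 l js 0 j)))
          / bbtaEta K 0 := by
    exact (div_le_div_iff_of_pos_right hη0).mpr (by linarith [Real.log_le_log hW0pos hW0le])
  -- endpoint 2 : Φstar(n+1) ≤ L_{n+1}(j')
  have hWn1pos : 0 < ∑ j, Real.exp (-(bbtaEta K n) * bbtaCumLoss K L0 l js (n + 1) j) :=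
    sumExp_pos hK0 _
  have hsingle : Real.exp (-(bbtaEta K n) * bbtaCumLoss K L0 l js (n + 1) j')
      ≤ ∑ j, Real.exp (-(bbtaEta K n) * bbtaCumLoss K L0 l js (n + 1) j) :=
    Finset.single_le_sum
      (f := fun j => Real.exp (-(bbtaEta K n) * bbtaCumLoss K L0 l js (n + 1) j))
      (fun j _ => (Real.exp_pos _).le) (Finset.mem_univ j')
  have hend2 : -(Real.log (∑ j, Real.exp (-(bbtaEta K n) * bbtaCumLoss K L0 l js (n + 1) j)))
        / bbtaEta K n ≤ bbtaCumLoss K L0 l js (n + 1) j' := by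
    have hlog : -(bbtaEta K n) * bbtaCumLoss K L0 l js (n + 1) j'
        ≤ Real.log (∑ j, Real.exp (-(bbtaEta K n) * bbtaCumLoss K L0 l js (n + 1) j)) := by
      calc -(bbtaEta K n) * bbtaCumLoss K L0 l js (n + 1) j'
          = Real.log (Real.exp (-(bbtaEta K n) * bbtaCumLoss K L0 l js (n + 1) j')) :=
            (Real.log_exp _).symm
        _ ≤ _ := Real.log_le_log (Real.exp_pos _) hsingle
    rw [div_le_iff₀ hηn]
    nlinarith [hlog]
  have hexpand := bbtaCumLoss_eq_sum L0 l js (n + 1) j'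
  have hsum : ∑ t ∈ Finset.range (n + 1),
        (l t (js t) - bbtaEta K t / 2 * ((l t (js t)) ^ 2 / bbtaProb K L0 l js t (js t)))
      = ∑ t ∈ Finset.range (n + 1), l t (js t)
        - ∑ t ∈ Finset.range (n + 1),
            bbtaEta K t / 2 * ((l t (js t)) ^ 2 / bbtaProb K L0 l js t (js t)) :=
    Finset.sum_sub_distrib _ _
  have hfrac : Real.log K * (1 / bbtaEta K n - 1 / bbtaEta K 0)
      = Real.log K / bbtaEta K n - Real.log K / bbtaEta K 0 := by
    field_simp
  rw [hfrac, hsum] at htel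
  rw [hexpand] at hend2
  set x1 := -Real.log (∑ j, Real.exp (-(bbtaEta K 0) * bbtaCumLoss K L0 l js 0 j)) / bbtaEta K 0 with hx1
  set x2 := -Real.log (∑ j, Real.exp (-(bbtaEta K n) * bbtaCumLoss K L0 l js (n + 1) j)) / bbtaEta K n with hx2
  set s1 := ∑ t ∈ Finset.range (n + 1), l t (js t) with hs1
  set s2 := ∑ t ∈ Finset.range (n + 1), bbtaEta K t / 2 * (l t (js t) ^ 2 / bbtaProb K L0 l js t (js t)) with hs2
  set s3 := ∑ t ∈ Finset.range (n + 1), bbtaEst L0 l js t j' with hs3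
  set c1 := Real.log (K : ℝ) / bbtaEta K n with hc1
  set c2 := Real.log (K : ℝ) / bbtaEta K 0 with hc2
  rw [neg_div] at hend1
  linarith [htel, hend1, hend2]

section Expectation

variable {K : ℕ} (L0 : Fin K → ℝ) (l : ℕ → Fin K → ℝ) (j' : Fin K)

lemma extSeq_apply {T : ℕ} (js : Fin T → Fin K) (j0 : Fin K) (t : Fin T) :
    extSeq js j0 (t : ℕ) = js t := by
  simp [extSeq, t.isLt]

lemma extSeq_snoc_agree {n : ℕ} (js : Fin n → Fin K) (a j0 : Fin K) (s : ℕ) (hs : s < n) :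
    extSeq (Fin.snoc js a) j0 s = extSeq js j0 s := by
  simp only [extSeq, dif_pos hs, dif_pos (hs.trans (Nat.lt_succ_self n))]
  have : (⟨s, hs.trans (Nat.lt_succ_self n)⟩ : Fin (n + 1)) = Fin.castSucc ⟨s, hs⟩ := rfl
  rw [this, Fin.snoc_castSucc]

lemma extSeq_snoc_last {n : ℕ} (js : Fin n → Fin K) (a j0 : Fin K) :
    extSeq (Fin.snoc js a) j0 n = a := by
  simp only [extSeq, dif_pos (Nat.lt_succ_self n)]
  have : (⟨n, Nat.lt_succ_self n⟩ : Fin (n + 1)) = Fin.last n := rfl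
  rw [this, Fin.snoc_last]

/-- expectation of `F` under the arm-selection process over the first `n` rounds. -/
noncomputable def bbtaE (n : ℕ) (F : (ℕ → Fin K) → ℝ) : ℝ :=
  ∑ js : Fin n → Fin K,
    (∏ t : Fin n, bbtaProb K L0 l (extSeq js j') (t : ℕ) (js t)) * F (extSeq js j')

lemma bbtaE_succ (n : ℕ) (F : (ℕ → Fin K) → ℝ) :
    bbtaE L0 l j' (n + 1) F
      = ∑ js : Fin n → Fin K,
          (∏ t : Fin n, bbtaProb K L0 l (extSeq js j') (t : ℕ) (js t)) *
            (∑ a, bbtaProb K L0 l (extSeq js j') n a * F (extSeq (Fin.snoc js a) j')) := by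
  rw [bbtaE, ← Equiv.sum_comp (Fin.snocEquiv (fun _ => Fin K)), Fintype.sum_prod_type,
    Finset.sum_comm]
  apply Finset.sum_congr rfl
  intro js _
  rw [Finset.mul_sum]
  apply Finset.sum_congr rfl
  intro a _
  have heq : (Fin.snocEquiv (fun _ => Fin K) (a, js) : Fin (n + 1) → Fin K)
      = Fin.snoc js a := by
    funext i
    rfl
  rw [heq]
  have hprod : ∏ t : Fin (n + 1),
        bbtaProb K L0 l (extSeq (Fin.snoc js a) j') (t : ℕ) ((Fin.snoc js a : Fin (n + 1) → Fin K) t)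
      = (∏ t : Fin n, bbtaProb K L0 l (extSeq js j') (t : ℕ) (js t)) *
          bbtaProb K L0 l (extSeq js j') n a := by
    rw [Fin.prod_univ_castSucc]
    congr 1
    · apply Finset.prod_congr rfl
      intro t _
      rw [Fin.snoc_castSucc]
      have hc : (Fin.castSucc t : ℕ) = (t : ℕ) := rfl
      rw [hc, bbtaProb_prefix L0 l _ _ (t : ℕ)
        (fun s hs => extSeq_snoc_agree js a j' s (hs.trans t.isLt))]
    · rw [Fin.snoc_last]
      have hc : ((Fin.last n : Fin (n + 1)) : ℕ) = n := rfl
      rw [hc, bbtaProb_prefix L0 l _ _ n (fun s hs => extSeq_snoc_agree js a j' s hs)]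
  rw [hprod]
  ring

lemma bbtaE_const (hK : 0 < K) (n : ℕ) (c : ℝ) :
    bbtaE L0 l j' n (fun _ => c) = c := by
  induction n with
  | zero =>
    rw [bbtaE]
    rw [Fintype.sum_subsingleton _ (fun (i : Fin 0) => j')]
    simp
  | succ n ih =>
    rw [bbtaE_succ]
    have : ∀ js : Fin n → Fin K,
        (∑ a, bbtaProb K L0 l (extSeq js j') n a * c) = c := by
      intro js
      rw [← Finset.sum_mul, bbtaProb_sum L0 l hK, one_mul]
    calc ∑ js : Fin n → Fin K,
          (∏ t : Fin n, bbtaProb K L0 l (extSeq js j') (t : ℕ) (js t)) *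
            (∑ a, bbtaProb K L0 l (extSeq js j') n a * c)
        = ∑ js : Fin n → Fin K,
          (∏ t : Fin n, bbtaProb K L0 l (extSeq js j') (t : ℕ) (js t)) * c := by
          apply Finset.sum_congr rfl
          intro js _
          rw [this js]
      _ = c := ih
end Expectation

section Expectation2

variable {K : ℕ} (L0 : Fin K → ℝ) (l : ℕ → Fin K → ℝ) (j' : Fin K)

lemma bbtaE_cond (hK : 0 < K) (t : ℕ) (g : (ℕ → Fin K) → Fin K → ℝ) (c : ℝ)
    (hg : ∀ u v : ℕ → Fin K, (∀ s, s < t → u s = v s) → g u = g v)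
    (hc : ∀ u : ℕ → Fin K, ∑ a, bbtaProb K L0 l u t a * g u a = c) :
    ∀ n, t < n → bbtaE L0 l j' n (fun u => g u (u t)) = c := by
  intro n
  induction n with
  | zero => omega
  | succ n ih =>
    intro htn
    rw [bbtaE_succ]
    rcases Nat.lt_or_ge t n with htn' | htn'
    · -- t < n : inner function doesn't depend on last coordinate
      have hinner : ∀ (js : Fin n → Fin K) (a : Fin K),
          g (extSeq (Fin.snoc js a) j') (extSeq (Fin.snoc js a) j' t)
            = g (extSeq js j') (extSeq js j' t) := by
        intro js a
        rw [hg _ (extSeq js j') (fun s hs => extSeq_snoc_agree js a j' s (hs.trans htn')),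
          extSeq_snoc_agree js a j' t htn']
      calc ∑ js : Fin n → Fin K,
            (∏ s : Fin n, bbtaProb K L0 l (extSeq js j') (s : ℕ) (js s)) *
              (∑ a, bbtaProb K L0 l (extSeq js j') n a *
                g (extSeq (Fin.snoc js a) j') (extSeq (Fin.snoc js a) j' t))
          = ∑ js : Fin n → Fin K,
            (∏ s : Fin n, bbtaProb K L0 l (extSeq js j') (s : ℕ) (js s)) *
              (g (extSeq js j') (extSeq js j' t)) := by
            apply Finset.sum_congr rfl
            intro js _
            congr 1
            simp_rw [hinner js]
            rw [← Finset.sum_mul, bbtaProb_sum L0 l hK, one_mul]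
        _ = c := ih htn'
    · -- t = n
      have htn'' : t = n := by omega
      subst htn''
      have hinner : ∀ (js : Fin t → Fin K),
          (∑ a, bbtaProb K L0 l (extSeq js j') t a *
            g (extSeq (Fin.snoc js a) j') (extSeq (Fin.snoc js a) j' t)) = c := by
        intro js
        rw [← hc (extSeq js j')]
        apply Finset.sum_congr rfl
        intro a _
        rw [extSeq_snoc_last,
          hg _ (extSeq js j') (fun s hs => extSeq_snoc_agree js a j' s hs)]
      calc ∑ js : Fin t → Fin K,
            (∏ s : Fin t, bbtaProb K L0 l (extSeq js j') (s : ℕ) (js s)) *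
              (∑ a, bbtaProb K L0 l (extSeq js j') t a *
                g (extSeq (Fin.snoc js a) j') (extSeq (Fin.snoc js a) j' t))
          = ∑ js : Fin t → Fin K,
            (∏ s : Fin t, bbtaProb K L0 l (extSeq js j') (s : ℕ) (js s)) * c := by
            apply Finset.sum_congr rfl
            intro js _
            rw [hinner js]
        _ = c := bbtaE_const L0 l j' hK t c

lemma bbtaE_add (n : ℕ) (F G : (ℕ → Fin K) → ℝ) :
    bbtaE L0 l j' n (fun u => F u + G u) = bbtaE L0 l j' n F + bbtaE L0 l j' n G := by
  simp [bbtaE, mul_add, Finset.sum_add_distrib]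

lemma bbtaE_finsum {ι : Type*} (n : ℕ) (s : Finset ι) (F : ι → (ℕ → Fin K) → ℝ) :
    bbtaE L0 l j' n (fun u => ∑ i ∈ s, F i u) = ∑ i ∈ s, bbtaE L0 l j' n (F i) := by
  simp only [bbtaE, Finset.mul_sum]
  rw [Finset.sum_comm]

lemma bbtaE_mono (hK : 0 < K) (n : ℕ) (F G : (ℕ → Fin K) → ℝ)
    (h : ∀ u, F u ≤ G u) : bbtaE L0 l j' n F ≤ bbtaE L0 l j' n G := by
  apply Finset.sum_le_sum
  intro js _
  apply mul_le_mul_of_nonneg_left (h _)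
  exact Finset.prod_nonneg fun t _ => (bbtaProb_pos L0 l hK _ _ _).le

end Expectation2

lemma sum_one_div_sqrt (T : ℕ) :
    ∑ t ∈ Finset.range T, 1 / Real.sqrt (t + 1) ≤ 2 * Real.sqrt T := by
  induction T with
  | zero => simp
  | succ T ih =>
    rw [Finset.sum_range_succ]
    have ha : (0 : ℝ) ≤ Real.sqrt T := Real.sqrt_nonneg _
    have hb : (0 : ℝ) < Real.sqrt ((T : ℝ) + 1) := Real.sqrt_pos.mpr (by positivity)
    have ha2 : Real.sqrt T ^ 2 = T := Real.sq_sqrt (by positivity)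
    have hb2 : Real.sqrt ((T : ℝ) + 1) ^ 2 = (T : ℝ) + 1 := Real.sq_sqrt (by positivity)
    have hkey : 1 / Real.sqrt ((T : ℝ) + 1)
        ≤ 2 * Real.sqrt ((T : ℝ) + 1) - 2 * Real.sqrt T := by
      rw [div_le_iff₀ hb]
      nlinarith [sq_nonneg (Real.sqrt ((T : ℝ) + 1) - Real.sqrt T)]
    have hcast : ((T + 1 : ℕ) : ℝ) = (T : ℝ) + 1 := by push_cast; ring
    rw [hcast]
    linarith

lemma bbtaEta_eq (K t : ℕ) (hK : 2 ≤ K) :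
    bbtaEta K t = Real.sqrt (Real.log K / K) * (1 / Real.sqrt (t + 1)) := by
  have hlog : (0 : ℝ) ≤ Real.log K := Real.log_nonneg (by exact_mod_cast hK.trans' one_le_two)
  have h1 : (0:ℝ) < (t:ℝ) + 1 := by positivity
  rw [bbtaEta]
  rw [show Real.log K / (((t : ℝ) + 1) * K) = Real.log K / K * ((t : ℝ) + 1)⁻¹ by
    field_simp]
  rw [Real.sqrt_mul (by positivity), Real.sqrt_inv, one_div]

lemma log_div_eta {K : ℕ} (hK : 2 ≤ K) (n : ℕ) :
    Real.log K / bbtaEta K n = Real.sqrt ((((n : ℝ)) + 1) * K * Real.log K) := by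
  have hlog : (0 : ℝ) < Real.log K := Real.log_pos (by exact_mod_cast hK)
  have hc : (0 : ℝ) < ((n : ℝ) + 1) * K := by
    have : (0:ℝ) < K := by positivity
    positivity
  rw [bbtaEta, Real.sqrt_div hlog.le, div_div_eq_mul_div,
    Real.sqrt_mul hc.le, mul_comm (Real.log (K : ℝ)) _, mul_div_assoc, Real.div_sqrt]

lemma second_term_bound {K : ℕ} (hK : 2 ≤ K) (n : ℕ) :
    ∑ t ∈ Finset.range (n + 1), bbtaEta K t / 2 * (K : ℝ)
      ≤ Real.sqrt (((n : ℝ) + 1) * K * Real.log K) := by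
  have hKr : (0 : ℝ) < K := by positivity
  have hlog : (0 : ℝ) ≤ Real.log K := Real.log_nonneg (by exact_mod_cast hK.trans' one_le_two)
  have hS : ∑ t ∈ Finset.range (n + 1), 1 / Real.sqrt ((t : ℝ) + 1)
      ≤ 2 * Real.sqrt ((n : ℝ) + 1) := by
    have := sum_one_div_sqrt (n + 1)
    rwa [show ((n + 1 : ℕ) : ℝ) = (n : ℝ) + 1 by push_cast; ring] at this
  have e1 : ∑ t ∈ Finset.range (n + 1), bbtaEta K t / 2 * (K : ℝ)
      = (K : ℝ) / 2 * (Real.sqrt (Real.log K / K) *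
          ∑ t ∈ Finset.range (n + 1), 1 / Real.sqrt ((t : ℝ) + 1)) := by
    rw [Finset.mul_sum, Finset.mul_sum]
    apply Finset.sum_congr rfl
    intro t _
    rw [bbtaEta_eq K t hK]
    ring
  rw [e1]
  have e2 : (K : ℝ) / 2 * (Real.sqrt (Real.log K / K) * (2 * Real.sqrt ((n : ℝ) + 1)))
      = Real.sqrt (((n : ℝ) + 1) * K * Real.log K) := by
    have e : Real.sqrt ((K : ℝ) * Real.log K) = (K : ℝ) * Real.sqrt (Real.log K / K) := by
      rw [show (K : ℝ) * Real.log K = (K : ℝ) ^ 2 * (Real.log K / K) by field_simp,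
        Real.sqrt_mul (by positivity), Real.sqrt_sq hKr.le]
    have e3 : Real.sqrt (((n : ℝ) + 1) * K * Real.log K)
        = Real.sqrt ((K : ℝ) * Real.log K) * Real.sqrt ((n : ℝ) + 1) := by
      rw [← Real.sqrt_mul (by positivity)]
      congr 1
      ring
    rw [e3, e]
    ring
  rw [← e2]
  have h0 : (0 : ℝ) ≤ Real.sqrt (Real.log K / K) := Real.sqrt_nonneg _
  have h1 : (0 : ℝ) ≤ (K : ℝ) / 2 := by positivity
  exact mul_le_mul_of_nonneg_left (mul_le_mul_of_nonneg_left hS h0) h1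

lemma bbtaE_smul {K : ℕ} (L0 : Fin K → ℝ) (l : ℕ → Fin K → ℝ) (j' : Fin K)
    (n : ℕ) (c : ℝ) (F : (ℕ → Fin K) → ℝ) :
    bbtaE L0 l j' n (fun u => c * F u) = c * bbtaE L0 l j' n F := by
  simp [bbtaE, Finset.mul_sum, mul_left_comm]


/-- Lemma 1 (single-context regret bound of BBTA): the expected regret of the
exponentially weighted forecaster with importance-weighted loss estimates,
time-varying learning rate `η_t = √(ln K/(tK))`, and initial losses `L_{j,0}`
from the pure exploration phase, against any fixed arm `j'`, is at most
`2√(T₂·K·ln K) + (N'²/4)·√(ln K/K) + N'`. -/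
theorem bbta_single_context_regret (K T₂ N' : ℕ) (hK : 2 ≤ K)
    (l : ℕ → Fin K → ℝ) (hl : ∀ t j, l t j ∈ Set.Icc (0 : ℝ) 1)
    (L0 : Fin K → ℝ) (hL0 : ∀ j, L0 j ∈ Set.Icc (0 : ℝ) (N' : ℝ))
    (hL0sq : ∑ j, (L0 j) ^ 2 ≤ K * N' ^ 2 / 2)
    (j' : Fin K) :
    ∑ js : Fin T₂ → Fin K,
        (∏ t : Fin T₂, bbtaProb K L0 l (extSeq js j') t (js t)) *
          (∑ t : Fin T₂, (l t (js t) - l t j'))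
      ≤ 2 * Real.sqrt (T₂ * K * Real.log K)
        + ((N' : ℝ) ^ 2 / 4) * Real.sqrt (Real.log K / K) + N' := by
  have hK0 : 0 < K := by omega
  have hlog0 : (0 : ℝ) ≤ Real.log K := Real.log_nonneg (by exact_mod_cast hK.trans' one_le_two)
  have hRext : (0 : ℝ) ≤ ((N' : ℝ) ^ 2 / 4) * Real.sqrt (Real.log K / K) := by positivity
  cases T₂ with
  | zero =>
    have hz : ∑ js : Fin 0 → Fin K,
        (∏ t : Fin 0, bbtaProb K L0 l (extSeq js j') t (js t)) *
          (∑ t : Fin 0, (l t (js t) - l t j')) = 0 := by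
      simp
    rw [hz]
    have h1 : (0 : ℝ) ≤ Real.sqrt (0 * K * Real.log K) := Real.sqrt_nonneg _
    have h2 : (0 : ℝ) ≤ (N' : ℝ) := by positivity
    push_cast
    nlinarith
  | succ n =>
    have hL0nn : ∀ j, 0 ≤ L0 j := fun j => (hL0 j).1
    have hcast : ((n + 1 : ℕ) : ℝ) = (n : ℝ) + 1 := by push_cast; ring
    -- LHS as an expectation
    have hE : ∑ js : Fin (n + 1) → Fin K,
        (∏ t : Fin (n + 1), bbtaProb K L0 l (extSeq js j') t (js t)) *
          (∑ t : Fin (n + 1), (l t (js t) - l t j'))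
        = bbtaE L0 l j' (n + 1)
            (fun u => ∑ t ∈ Finset.range (n + 1), (l t (u t) - l t j')) := by
      rw [bbtaE]
      apply Finset.sum_congr rfl
      intro js _
      congr 1
      rw [← Fin.sum_univ_eq_sum_range (fun t => (l t (extSeq js j' t) - l t j')) (n + 1)]
      apply Finset.sum_congr rfl
      intro t _
      rw [extSeq_apply]
    rw [hE]
    -- deterministic bound
    have hFG : ∀ u : ℕ → Fin K,
        (∑ t ∈ Finset.range (n + 1), (l t (u t) - l t j'))
          ≤ (L0 j' + Real.log K / bbtaEta K n - ∑ t ∈ Finset.range (n + 1), l t j')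
            + ((∑ t ∈ Finset.range (n + 1), bbtaEst L0 l u t j')
              + ∑ t ∈ Finset.range (n + 1),
                  bbtaEta K t / 2 * ((l t (u t)) ^ 2 / bbtaProb K L0 l u t (u t))) := by
      intro u
      have hd := deterministic_bound L0 l hK hl hL0nn u j' n
      have hsplit : ∑ t ∈ Finset.range (n + 1), (l t (u t) - l t j')
          = ∑ t ∈ Finset.range (n + 1), l t (u t)
            - ∑ t ∈ Finset.range (n + 1), l t j' := Finset.sum_sub_distrib _ _
      linarith
    have hmono := bbtaE_mono L0 l j' hK0 (n + 1) _ _ hFG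
    refine hmono.trans ?_
    -- split the expectation
    rw [bbtaE_add L0 l j' (n + 1)
      (fun _ => L0 j' + Real.log K / bbtaEta K n - ∑ t ∈ Finset.range (n + 1), l t j')
      (fun u => (∑ t ∈ Finset.range (n + 1), bbtaEst L0 l u t j')
        + ∑ t ∈ Finset.range (n + 1),
            bbtaEta K t / 2 * ((l t (u t)) ^ 2 / bbtaProb K L0 l u t (u t)))]
    rw [bbtaE_const L0 l j' hK0]
    rw [bbtaE_add L0 l j' (n + 1)
      (fun u => ∑ t ∈ Finset.range (n + 1), bbtaEst L0 l u t j')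
      (fun u => ∑ t ∈ Finset.range (n + 1),
          bbtaEta K t / 2 * ((l t (u t)) ^ 2 / bbtaProb K L0 l u t (u t)))]
    -- the estimated-loss expectations
    have hest : ∀ t, t < n + 1 →
        bbtaE L0 l j' (n + 1) (fun u => bbtaEst L0 l u t j') = l t j' := by
      intro t ht
      have h := bbtaE_cond L0 l j' hK0 t
        (fun u a => if j' = a then l t j' / bbtaProb K L0 l u t j' else 0) (l t j')
        (by
          intro u v huv
          funext a
          rw [bbtaProb_prefix L0 l u v t huv])
        (by
          intro u
          rw [Finset.sum_eq_single j']
          · beta_reduce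
            rw [if_pos rfl, mul_comm, div_mul_cancel₀ _ (bbtaProb_pos L0 l hK0 u t j').ne']
          · intro b _ hb
            beta_reduce
            rw [if_neg (fun h => hb h.symm), mul_zero]
          · intro h
            exact absurd (Finset.mem_univ _) h)
        (n + 1) ht
      exact h
    have hE1 : bbtaE L0 l j' (n + 1)
        (fun u => ∑ t ∈ Finset.range (n + 1), bbtaEst L0 l u t j')
        = ∑ t ∈ Finset.range (n + 1), l t j' := by
      rw [bbtaE_finsum L0 l j' (n + 1) (Finset.range (n + 1))
        (fun t u => bbtaEst L0 l u t j')]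
      exact Finset.sum_congr rfl fun t ht => hest t (Finset.mem_range.mp ht)
    -- the second-moment expectations
    have hQ : ∀ t, t < n + 1 →
        bbtaE L0 l j' (n + 1)
          (fun u => (l t (u t)) ^ 2 / bbtaProb K L0 l u t (u t)) = ∑ a, (l t a) ^ 2 := by
      intro t ht
      have h := bbtaE_cond L0 l j' hK0 t
        (fun u a => (l t a) ^ 2 / bbtaProb K L0 l u t a) (∑ a, (l t a) ^ 2)
        (by
          intro u v huv
          funext a
          rw [bbtaProb_prefix L0 l u v t huv])
        (by
          intro u
          apply Finset.sum_congr rfl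
          intro a _
          beta_reduce
          rw [mul_comm, div_mul_cancel₀ _ (bbtaProb_pos L0 l hK0 u t a).ne'])
        (n + 1) ht
      exact h
    have hE2 : bbtaE L0 l j' (n + 1)
        (fun u => ∑ t ∈ Finset.range (n + 1),
          bbtaEta K t / 2 * ((l t (u t)) ^ 2 / bbtaProb K L0 l u t (u t)))
        = ∑ t ∈ Finset.range (n + 1), bbtaEta K t / 2 * ∑ a, (l t a) ^ 2 := by
      rw [bbtaE_finsum L0 l j' (n + 1) (Finset.range (n + 1))
        (fun t u => bbtaEta K t / 2 * ((l t (u t)) ^ 2 / bbtaProb K L0 l u t (u t)))]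
      apply Finset.sum_congr rfl
      intro t ht
      rw [bbtaE_smul L0 l j' (n + 1) (bbtaEta K t / 2)
        (fun u => (l t (u t)) ^ 2 / bbtaProb K L0 l u t (u t)),
        hQ t (Finset.mem_range.mp ht)]
    rw [hE1, hE2]
    -- numeric bounds
    have hsec : ∑ t ∈ Finset.range (n + 1), bbtaEta K t / 2 * ∑ a, (l t a) ^ 2
        ≤ Real.sqrt (((n : ℝ) + 1) * K * Real.log K) := by
      refine le_trans ?_ (second_term_bound hK n)
      apply Finset.sum_le_sum
      intro t _
      apply mul_le_mul_of_nonneg_left _ (div_nonneg (bbtaEta_nonneg K t) (by norm_num))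
      calc ∑ a, (l t a) ^ 2 ≤ ∑ _a : Fin K, (1 : ℝ) := by
            apply Finset.sum_le_sum
            intro a _
            have h1 := (hl t a).1
            have h2 := (hl t a).2
            nlinarith
        _ = (K : ℝ) := by simp
    have hlogeta := log_div_eta hK n
    have hL0j := (hL0 j').2
    have hgoalcast : Real.sqrt (((n + 1 : ℕ) : ℝ) * K * Real.log K)
        = Real.sqrt (((n : ℝ) + 1) * K * Real.log K) := by rw [hcast]
    rw [hgoalcast]
    linarith
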